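/- arXiv:math/0202299 — 2 statements merged into one kernel-verified Lean document; each statement's English description precedes it below -/
import Mathlib

section
/- For every real α > 0 and every complex z with Re(z) > 0, the Laplace transform identity ∫₀^∞ exp(−z·u)·(1/√(2π·u))·exp(−α²/(2u)) du = exp(−α·√(2z))/√(2z) holds, where √ denotes the principal branch of the square root. -/
open MeasureTheory Real Set Filter Topology

lemma phi_hasDeriv (c : ℝ) {t : ℝ} (ht : 0 < t) :
    HasDerivAt (fun t : ℝ => t - c / t) (1 + c / t ^ 2) t := by
  have h := ((hasDerivAt_inv ht.ne').const_mul c)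
  have h2 := (hasDerivAt_id t).sub h
  convert h2 using 1
  all_goals try rfl
  ring

lemma phi_strictMono (c : ℝ) (hc : 0 < c) :
    StrictMonoOn (fun t : ℝ => t - c / t) (Ioi 0) := by
  intro x hx y hy hxy
  have : c / y < c / x := div_lt_div_of_pos_left hc hx hxy
  simp only
  linarith

lemma phi_image (c : ℝ) (hc : 0 < c) :
    (fun t : ℝ => t - c / t) '' (Ioi 0) = univ := by
  apply eq_univ_of_forall
  intro s
  set r := Real.sqrt (s ^ 2 + 4 * c) with hr
  have h1 : |s| < r := by
    rw [hr, ← Real.sqrt_sq_eq_abs]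
    exact Real.sqrt_lt_sqrt (sq_nonneg s) (by linarith)
  have hr2 : r ^ 2 = s ^ 2 + 4 * c := Real.sq_sqrt (by nlinarith [sq_nonneg s])
  have habs := neg_abs_le s
  have hpos : 0 < (s + r) / 2 := by linarith
  refine ⟨(s + r) / 2, hpos, ?_⟩
  have key : ((s + r) / 2) ^ 2 - s * ((s + r) / 2) - c = 0 := by
    have : ((s + r) / 2) ^ 2 = (s ^ 2 + 2 * s * r + r ^ 2) / 4 := by ring
    rw [this, hr2]; ring
  simp only
  have hsr : 0 < s + r := by linarith
  field_simp [hsr.ne']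
  nlinarith [key]

lemma key_integral (c : ℝ) (hc : 0 < c) :
    ∫ t in Ioi (0:ℝ), (1 + c / t ^ 2) * Real.exp (-(t - c / t) ^ 2) = Real.sqrt π := by
  have hderiv : ∀ t ∈ Ioi (0:ℝ), HasDerivWithinAt (fun t : ℝ => t - c / t)
      (1 + c / t ^ 2) (Ioi 0) t := fun t ht => (phi_hasDeriv c ht).hasDerivWithinAt
  have h := integral_image_eq_integral_abs_deriv_smul measurableSet_Ioi hderiv
    ((phi_strictMono c hc).injOn) (fun s => Real.exp (-s ^ 2))
  rw [phi_image c hc] at h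
  have h2 : ∫ s : ℝ, Real.exp (-s ^ 2) = Real.sqrt π := by
    simpa using integral_gaussian 1
  rw [← setIntegral_univ (μ := volume)] at h2 -- maybe names differ
  rw [← h2, h]
  refine setIntegral_congr_fun measurableSet_Ioi fun t ht => ?_
  have ht : (0:ℝ) < t := ht
  have : |1 + c / t ^ 2| = 1 + c / t ^ 2 := by
    rw [abs_of_pos]; positivity
  rw [smul_eq_mul, this]

lemma key_integrable (c : ℝ) (hc : 0 < c) :
    IntegrableOn (fun t => (1 + c / t ^ 2) * Real.exp (-(t - c / t) ^ 2)) (Ioi (0:ℝ)) := by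
  have hderiv : ∀ t ∈ Ioi (0:ℝ), HasDerivWithinAt (fun t : ℝ => t - c / t)
      (1 + c / t ^ 2) (Ioi 0) t := fun t ht => (phi_hasDeriv c ht).hasDerivWithinAt
  have h := (integrableOn_image_iff_integrableOn_abs_deriv_smul measurableSet_Ioi hderiv
    ((phi_strictMono c hc).injOn) (fun s => Real.exp (-s ^ 2)))
  rw [phi_image c hc] at h
  have hg : IntegrableOn (fun s : ℝ => Real.exp (-s ^ 2)) univ := by
    rw [integrableOn_univ]
    simpa using integrable_exp_neg_mul_sq (one_pos)
  have := h.mp hg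
  apply this.congr_fun ?_ measurableSet_Ioi
  intro t ht
  have ht : (0:ℝ) < t := ht
  have habs : |1 + c / t ^ 2| = 1 + c / t ^ 2 := by rw [abs_of_pos]; positivity
  simp only [smul_eq_mul, habs]

lemma inv_subst (c : ℝ) (hc : 0 < c) :
    ∫ t in Ioi (0:ℝ), Real.exp (-(t - c / t) ^ 2) =
      ∫ t in Ioi (0:ℝ), (c / t ^ 2) * Real.exp (-(t - c / t) ^ 2) := by
  have hderiv : ∀ t ∈ Ioi (0:ℝ), HasDerivWithinAt (fun t : ℝ => c / t)
      (-(c / t ^ 2)) (Ioi 0) t := by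
    intro t ht
    have ht : (0:ℝ) < t := ht
    have h := ((hasDerivAt_inv ht.ne').const_mul c).hasDerivWithinAt (s := Ioi 0)
    convert h using 1
    all_goals try rfl
    ring
  have hinj : InjOn (fun t : ℝ => c / t) (Ioi 0) := by
    intro x hx y hy hxy
    have hx : (0:ℝ) < x := hx
    have hy : (0:ℝ) < y := hy
    field_simp at hxy
    exact hxy.symm
  have himg : (fun t : ℝ => c / t) '' (Ioi 0) = Ioi 0 := by
    apply Subset.antisymm
    · rintro _ ⟨t, ht, rfl⟩
      exact div_pos hc ht
    · intro s hs
      exact ⟨c / s, div_pos hc hs, by field_simp⟩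
  have h := integral_image_eq_integral_abs_deriv_smul measurableSet_Ioi hderiv hinj
    (fun s => Real.exp (-(s - c / s) ^ 2))
  rw [himg] at h
  rw [h]
  refine setIntegral_congr_fun measurableSet_Ioi fun t ht => ?_
  have ht : (0:ℝ) < t := ht
  have h1 : c / (c / t) = t := by field_simp
  have h2 : |-(c / t ^ 2)| = c / t ^ 2 := by rw [abs_neg, abs_of_pos]; positivity
  simp only [smul_eq_mul, h1, h2]
  congr 2
  ring

lemma glaisher_one (c : ℝ) (hc : 0 < c) :
    ∫ t in Ioi (0:ℝ), Real.exp (-(t ^ 2 + c ^ 2 / t ^ 2)) =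
      Real.sqrt π / 2 * Real.exp (-(2 * c)) := by
  have hI1 : IntegrableOn (fun t => Real.exp (-(t - c / t) ^ 2)) (Ioi (0:ℝ)) := by
    apply (key_integrable c hc).mono' ?_ ?_
    · refine ContinuousOn.aestronglyMeasurable ?_ measurableSet_Ioi
      exact Real.continuous_exp.comp_continuousOn
        (((continuousOn_id.sub (continuousOn_const.div continuousOn_id
          fun t ht => ne_of_gt ht)).pow 2).neg)
    · filter_upwards [ae_restrict_mem measurableSet_Ioi] with t ht
      have ht : (0:ℝ) < t := ht
      rw [Real.norm_eq_abs, abs_of_pos (Real.exp_pos _)]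
      nlinarith [Real.exp_pos (-(t - c / t) ^ 2), div_pos hc (pow_pos ht 2),
        Real.exp_le_exp.mpr (le_refl (-(t - c / t) ^ 2))]
  have hsplit : (∫ t in Ioi (0:ℝ), (1 + c / t ^ 2) * Real.exp (-(t - c / t) ^ 2)) =
      (∫ t in Ioi (0:ℝ), Real.exp (-(t - c / t) ^ 2)) +
      ∫ t in Ioi (0:ℝ), (c / t ^ 2) * Real.exp (-(t - c / t) ^ 2) := by
    rw [← integral_add hI1]
    · refine setIntegral_congr_fun measurableSet_Ioi fun t ht => ?_
      ring
    · have h2 : IntegrableOn ((fun t => (1 + c / t ^ 2) * Real.exp (-(t - c / t) ^ 2)) -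
          fun t => Real.exp (-(t - c / t) ^ 2)) (Ioi 0) := (key_integrable c hc).sub hI1
      refine h2.congr_fun (fun t ht => ?_) measurableSet_Ioi
      simp only [Pi.sub_apply]
      ring
  have hI12 := inv_subst c hc
  have hkey := key_integral c hc
  have hI1val : (∫ t in Ioi (0:ℝ), Real.exp (-(t - c / t) ^ 2)) = Real.sqrt π / 2 := by
    rw [hsplit, ← hI12] at hkey
    linarith
  have : ∀ t ∈ Ioi (0:ℝ), Real.exp (-(t ^ 2 + c ^ 2 / t ^ 2)) =
      Real.exp (-(2 * c)) * Real.exp (-(t - c / t) ^ 2) := by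
    intro t ht
    have ht : (0:ℝ) < t := ht
    rw [← Real.exp_add]
    congr 1
    field_simp
    ring
  rw [setIntegral_congr_fun measurableSet_Ioi this, integral_const_mul, hI1val]
  ring

lemma glaisher (a b : ℝ) (ha : 0 < a) (hb : 0 < b) :
    ∫ t in Ioi (0:ℝ), Real.exp (-(a * t ^ 2 + b / t ^ 2)) =
      Real.sqrt (π / a) / 2 * Real.exp (-(2 * Real.sqrt (a * b))) := by
  have hsa : 0 < Real.sqrt a := Real.sqrt_pos.mpr ha
  have hc : 0 < Real.sqrt (a * b) := Real.sqrt_pos.mpr (mul_pos ha hb)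
  have h := integral_comp_mul_left_Ioi
    (fun t => Real.exp (-(t ^ 2 + Real.sqrt (a * b) ^ 2 / t ^ 2))) 0 hsa
  simp only [mul_zero] at h
  have heq : ∀ t ∈ Ioi (0:ℝ),
      Real.exp (-(Real.sqrt a * t) ^ 2 - Real.sqrt (a * b) ^ 2 / (Real.sqrt a * t) ^ 2)
        = Real.exp (-(a * t ^ 2 + b / t ^ 2)) := by
    intro t ht
    have ht : (0:ℝ) < t := ht
    congr 1
    rw [mul_pow, Real.sq_sqrt ha.le, Real.sq_sqrt (mul_pos ha hb).le]
    field_simp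
    ring
  calc ∫ t in Ioi (0:ℝ), Real.exp (-(a * t ^ 2 + b / t ^ 2))
      = ∫ t in Ioi (0:ℝ),
          Real.exp (-((Real.sqrt a * t) ^ 2 + Real.sqrt (a * b) ^ 2 / (Real.sqrt a * t) ^ 2)) := by
        refine setIntegral_congr_fun measurableSet_Ioi fun t ht => ?_
        have h2 := heq t ht
        rw [← h2]; ring_nf
    _ = (Real.sqrt a)⁻¹ • ∫ t in Ioi (0:ℝ),
          Real.exp (-(t ^ 2 + Real.sqrt (a * b) ^ 2 / t ^ 2)) := h
    _ = Real.sqrt (π / a) / 2 * Real.exp (-(2 * Real.sqrt (a * b))) := by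
        rw [glaisher_one _ hc, smul_eq_mul, Real.sqrt_div pi_nonneg]
        field_simp

lemma sqrt_four' : Real.sqrt 4 = 2 := by
  rw [show (4:ℝ) = 2 ^ 2 by norm_num, Real.sqrt_sq (by norm_num)]

lemma real_case (α x : ℝ) (hα : 0 < α) (hx : 0 < x) :
    ∫ u in Ioi (0:ℝ), Real.exp (-(x * u)) *
      (1 / Real.sqrt (2 * π * u) * Real.exp (-α ^ 2 / (2 * u))) =
      Real.exp (-(α * Real.sqrt (2 * x))) / Real.sqrt (2 * x) := by
  set g : ℝ → ℝ := fun u => Real.exp (-(x * u)) *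
      (1 / Real.sqrt (2 * π * u) * Real.exp (-α ^ 2 / (2 * u))) with hg
  have hsub := integral_comp_rpow_Ioi_of_pos (g := g) (p := 2) (by norm_num)
  rw [← hsub]
  have hc : 2 / Real.sqrt (2 * π) = Real.sqrt (2 / π) := by
    rw [show (2:ℝ) / π = 4 / (2 * π) by
        rw [div_eq_div_iff pi_pos.ne' (by positivity)]; ring,
      Real.sqrt_div (by norm_num), sqrt_four']
  have heq : ∀ t ∈ Ioi (0:ℝ), (2 * t ^ ((2:ℝ) - 1)) • g (t ^ (2:ℝ)) =
      Real.sqrt (2 / π) * Real.exp (-(x * t ^ 2 + (α ^ 2 / 2) / t ^ 2)) := by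
    intro t ht
    have ht : (0:ℝ) < t := ht
    have hrp : t ^ (2:ℝ) = t ^ 2 := by
      rw [show (2:ℝ) = ((2:ℕ):ℝ) by norm_num, Real.rpow_natCast]
    have hsq : Real.sqrt (2 * π * t ^ 2) = Real.sqrt (2 * π) * t := by
      rw [Real.sqrt_mul (by positivity), Real.sqrt_sq ht.le]
    have hexp : Real.exp (-(x * t ^ 2)) * Real.exp (-α ^ 2 / (2 * t ^ 2)) =
        Real.exp (-(x * t ^ 2 + (α ^ 2 / 2) / t ^ 2)) := by
      rw [← Real.exp_add]; congr 1; field_simp; ring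
    have hsne : Real.sqrt (2 * π) ≠ 0 := by positivity
    have hmain : 2 * t * (Real.exp (-(x * t ^ 2)) *
        (1 / (Real.sqrt (2 * π) * t) * Real.exp (-α ^ 2 / (2 * t ^ 2)))) =
        2 / Real.sqrt (2 * π) *
          (Real.exp (-(x * t ^ 2)) * Real.exp (-α ^ 2 / (2 * t ^ 2))) := by
      field_simp
    show 2 * t ^ ((2:ℝ) - 1) * g (t ^ (2:ℝ)) = _
    rw [hrp, show ((2:ℝ) - 1) = 1 by norm_num, Real.rpow_one, hg]
    show 2 * t * (Real.exp (-(x * t ^ 2)) *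
      (1 / Real.sqrt (2 * π * t ^ 2) * Real.exp (-α ^ 2 / (2 * t ^ 2)))) = _
    rw [hsq, hmain, hexp, hc]
  rw [setIntegral_congr_fun measurableSet_Ioi heq, integral_const_mul,
    glaisher x (α ^ 2 / 2) hx (by positivity)]
  have h2 : Real.sqrt (x * (α ^ 2 / 2)) = α * Real.sqrt (x / 2) := by
    rw [show x * (α ^ 2 / 2) = α ^ 2 * (x / 2) by ring, Real.sqrt_mul (by positivity),
      Real.sqrt_sq hα.le]
  have h3 : Real.sqrt (2 * x) = 2 * Real.sqrt (x / 2) := by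
    rw [show (2 * x) = 4 * (x / 2) by ring, Real.sqrt_mul (by norm_num : (0:ℝ) ≤ 4), sqrt_four']
  have h5 : Real.sqrt (2 / π) * Real.sqrt (π / x) = Real.sqrt (2 / x) := by
    rw [← Real.sqrt_mul (by positivity)]
    congr 1
    field_simp
  have h6 : Real.sqrt (2 / x) / 2 = 1 / Real.sqrt (2 * x) := by
    rw [show (2:ℝ) / x = 4 / (2 * x) by
        rw [div_eq_div_iff hx.ne' (by positivity)]; ring,
      Real.sqrt_div (by norm_num), sqrt_four']
    ring
  rw [h2, show 2 * (α * Real.sqrt (x / 2)) = α * (2 * Real.sqrt (x / 2)) by ring, ← h3]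
  rw [show Real.sqrt (2/π) * (Real.sqrt (π/x) / 2 * Real.exp (-(α * Real.sqrt (2*x)))) =
      (Real.sqrt (2/π) * Real.sqrt (π/x)) / 2 * Real.exp (-(α * Real.sqrt (2*x))) by ring,
    h5, h6]
  ring

noncomputable def hkf (α : ℝ) : ℝ → ℝ :=
  fun u => 1 / Real.sqrt (2 * π * u) * Real.exp (-α ^ 2 / (2 * u))

lemma hkf_nonneg (α : ℝ) (u : ℝ) : 0 ≤ hkf α u := by
  unfold hkf; positivity

lemma hkf_contOn (α : ℝ) : ContinuousOn (hkf α) (Ioi 0) := by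
  unfold hkf
  apply ContinuousOn.mul
  · apply ContinuousOn.div continuousOn_const
    · exact (Real.continuous_sqrt.comp (by fun_prop)).continuousOn
    · intro u hu
      have : (0:ℝ) < u := hu
      positivity
  · apply Real.continuous_exp.comp_continuousOn
    apply ContinuousOn.div continuousOn_const (by fun_prop)
    intro u hu
    have : (0:ℝ) < u := hu
    positivity

lemma hkf_le (α : ℝ) (hα : 0 < α) {u : ℝ} (hu : 0 < u) :
    hkf α u ≤ 1 / (α * Real.sqrt π) := by
  unfold hkf
  rw [show -α ^ 2 / (2 * u) = -(α ^ 2 / (2 * u)) by ring]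
  set v := α ^ 2 / (2 * u) with hv
  have hvpos : 0 < v := by positivity
  have hexp : Real.exp (-v) ≤ 1 / Real.sqrt v := by
    rw [Real.exp_neg, one_div]
    apply inv_anti₀ (Real.sqrt_pos.mpr hvpos)
    have h1 : Real.sqrt v ≤ 1 + v := by
      nlinarith [Real.sq_sqrt hvpos.le, Real.sqrt_nonneg v, sq_nonneg (Real.sqrt v - 1)]
    linarith [Real.add_one_le_exp v]
  have hsv : Real.sqrt v = α / Real.sqrt (2 * u) := by
    rw [hv, Real.sqrt_div (by positivity), Real.sqrt_sq hα.le]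
  have hsp : Real.sqrt (2 * π * u) = Real.sqrt π * Real.sqrt (2 * u) := by
    rw [show 2 * π * u = π * (2 * u) by ring, Real.sqrt_mul pi_nonneg]
  have h2u : 0 < Real.sqrt (2 * u) := Real.sqrt_pos.mpr (by positivity)
  calc 1 / Real.sqrt (2 * π * u) * Real.exp (-v)
      ≤ 1 / Real.sqrt (2 * π * u) * (1 / Real.sqrt v) := by
        apply mul_le_mul_of_nonneg_left hexp (by positivity)
    _ = 1 / (α * Real.sqrt π) := by
        rw [hsv, hsp]
        rw [one_div_div]
        field_simp

lemma F_meas (α : ℝ) (z : ℂ) :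
    AEStronglyMeasurable (fun u : ℝ => Complex.exp (-z * u) * (hkf α u : ℂ))
      (volume.restrict (Ioi 0)) := by
  apply ContinuousOn.aestronglyMeasurable ?_ measurableSet_Ioi
  exact ((Complex.continuous_exp.comp (by fun_prop)).continuousOn).mul
    (Complex.continuous_ofReal.comp_continuousOn (hkf_contOn α))

lemma F'_meas (α : ℝ) (z : ℂ) :
    AEStronglyMeasurable (fun u : ℝ => -(u:ℂ) * Complex.exp (-z * u) * (hkf α u : ℂ))
      (volume.restrict (Ioi 0)) := by
  apply ContinuousOn.aestronglyMeasurable ?_ measurableSet_Ioi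
  exact (((Complex.continuous_ofReal.neg).continuousOn.mul
    ((Complex.continuous_exp.comp (by fun_prop)).continuousOn)).mul
    (Complex.continuous_ofReal.comp_continuousOn (hkf_contOn α)))

lemma F_norm (α : ℝ) (z : ℂ) (u : ℝ) :
    ‖Complex.exp (-z * u) * (hkf α u : ℂ)‖ = Real.exp (-z.re * u) * hkf α u := by
  rw [norm_mul, Complex.norm_exp, Complex.norm_real,
    Real.norm_eq_abs, abs_of_nonneg (hkf_nonneg α u)]
  congr 2
  simp [Complex.mul_re]

lemma F_integrable (α : ℝ) (hα : 0 < α) (z : ℂ) (hz : 0 < z.re) :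
    IntegrableOn (fun u : ℝ => Complex.exp (-z * u) * (hkf α u : ℂ)) (Ioi 0) := by
  apply Integrable.mono' (g := fun u => (1 / (α * Real.sqrt π)) * Real.exp (-z.re * u))
    (((exp_neg_integrableOn_Ioi 0 hz)).const_mul _) (F_meas α z)
  filter_upwards [ae_restrict_mem measurableSet_Ioi] with u hu
  rw [F_norm]
  have h1 := hkf_le α hα (mem_Ioi.mp hu)
  have h2 := Real.exp_pos (-z.re * u)
  nlinarith [hkf_nonneg α u]

lemma mul_exp_integrable {b : ℝ} (hb : 0 < b) :
    IntegrableOn (fun u : ℝ => u * Real.exp (-b * u)) (Ioi 0) := by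
  apply Integrable.mono' (g := fun u => (2 / b) * Real.exp (-(b / 2) * u))
    ((exp_neg_integrableOn_Ioi 0 (by positivity)).const_mul _)
  · exact (continuous_id.mul (by fun_prop)).aestronglyMeasurable.restrict
  · filter_upwards [ae_restrict_mem measurableSet_Ioi] with u hu
    have hu : (0:ℝ) < u := hu
    rw [Real.norm_eq_abs, abs_of_nonneg (by positivity)]
    have h1 : b / 2 * u ≤ Real.exp (b / 2 * u) := by
      linarith [Real.add_one_le_exp (b / 2 * u)]
    have h2 : u ≤ 2 / b * Real.exp (b / 2 * u) := by
      rw [div_mul_eq_mul_div, le_div_iff₀ hb]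
      nlinarith
    calc u * Real.exp (-b * u) ≤ (2 / b * Real.exp (b / 2 * u)) * Real.exp (-b * u) := by
          nlinarith [Real.exp_pos (-b * u)]
      _ = 2 / b * Real.exp (-(b / 2) * u) := by
          rw [mul_assoc, ← Real.exp_add]; congr 2; ring

lemma F_diff (α : ℝ) (hα : 0 < α) (z₀ : ℂ) (hz₀ : 0 < z₀.re) :
    DifferentiableAt ℂ
      (fun z => ∫ u in Ioi (0:ℝ), Complex.exp (-z * u) * (hkf α u : ℂ)) z₀ := by
  set r := z₀.re with hr
  have hε : 0 < r / 2 := by positivity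
  have h := hasDerivAt_integral_of_dominated_loc_of_deriv_le (μ := volume.restrict (Ioi 0))
    (F := fun z u => Complex.exp (-z * u) * (hkf α u : ℂ))
    (F' := fun z u => -(u:ℂ) * Complex.exp (-z * u) * (hkf α u : ℂ))
    (x₀ := z₀)
    (bound := fun u => (1 / (α * Real.sqrt π)) * (u * Real.exp (-(r / 2) * u)))
    (Metric.ball_mem_nhds z₀ hε) (Eventually.of_forall fun z => F_meas α z) (F_integrable α hα z₀ hz₀)
    (F'_meas α z₀) ?_ ((mul_exp_integrable hε).const_mul _) ?_
  · exact ⟨_, h.2⟩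
  · filter_upwards [ae_restrict_mem measurableSet_Ioi] with u hu z hz
    have hu : (0:ℝ) < u := hu
    have hre : r / 2 < z.re := by
      have h1 : |(z - z₀).re| ≤ ‖z - z₀‖ := Complex.abs_re_le_norm _
      have h2 : ‖z - z₀‖ < r / 2 := by
        rwa [Metric.mem_ball, Complex.dist_eq] at hz
      have := (abs_lt.mp (h1.trans_lt h2)).1
      simp only [Complex.sub_re] at this
      linarith
    have e1 : ‖-(u:ℂ)‖ = u := by
      rw [norm_neg, Complex.norm_real, Real.norm_eq_abs, abs_of_pos hu]
    have e2 : ‖Complex.exp (-z * u)‖ = Real.exp (-z.re * u) := by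
      rw [Complex.norm_exp]
      congr 1
      simp [Complex.mul_re]
    have e3 : ‖((hkf α u : ℝ) : ℂ)‖ = hkf α u := by
      rw [Complex.norm_real, Real.norm_eq_abs, abs_of_nonneg (hkf_nonneg α u)]
    rw [norm_mul, norm_mul, e1, e2, e3]
    have hexp : Real.exp (-z.re * u) ≤ Real.exp (-(r / 2) * u) :=
      Real.exp_le_exp.mpr (by nlinarith)
    have hk := hkf_le α hα hu
    calc u * Real.exp (-z.re * u) * hkf α u
        ≤ u * Real.exp (-(r / 2) * u) * hkf α u :=
          mul_le_mul_of_nonneg_right (mul_le_mul_of_nonneg_left hexp hu.le)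
            (hkf_nonneg α u)
      _ ≤ u * Real.exp (-(r / 2) * u) * (1 / (α * Real.sqrt π)) :=
          mul_le_mul_of_nonneg_left hk
            (mul_nonneg hu.le (Real.exp_pos _).le)
      _ = 1 / (α * Real.sqrt π) * (u * Real.exp (-(r / 2) * u)) := by ring
  · filter_upwards with u z hz
    have h := (((hasDerivAt_id z).neg.mul_const (u:ℂ)).cexp).mul_const (hkf α u : ℂ)
    convert h using 1
    all_goals try rfl
    simp only [Pi.neg_apply, id_eq]
    ring

lemma G_diff (α : ℝ) (z : ℂ) (hz : 0 < z.re) :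
    DifferentiableAt ℂ
      (fun z : ℂ => Complex.exp (-(α : ℂ) * (2 * z) ^ (1/2 : ℂ)) / (2 * z) ^ (1/2 : ℂ)) z := by
  have hslit : (2 * z) ∈ Complex.slitPlane := by
    left
    simp only [Complex.mul_re, Complex.re_ofNat, Complex.im_ofNat]
    nlinarith
  have hpow : DifferentiableAt ℂ (fun z : ℂ => (2 * z) ^ (1/2 : ℂ)) z :=
    (differentiableAt_id.const_mul 2).cpow (differentiableAt_const _) hslit
  have hne : (2 * z) ^ (1/2 : ℂ) ≠ 0 := by
    rw [Ne, Complex.cpow_eq_zero_iff, not_and_or]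
    left
    intro h
    rw [mul_eq_zero] at h
    rcases h with h | h
    · exact two_ne_zero h
    · rw [h] at hz; simp at hz
  exact ((hpow.const_mul (-(α:ℂ))).cexp).div hpow hne

lemma bridge1 (α x : ℝ) (hx : 0 < x) :
    (∫ u in Ioi (0:ℝ), Complex.exp (-(x:ℂ) * u) * (hkf α u : ℂ)) =
      ((∫ u in Ioi (0:ℝ), Real.exp (-(x * u)) * hkf α u : ℝ) : ℂ) := by
  rw [show ((∫ u in Ioi (0:ℝ), Real.exp (-(x * u)) * hkf α u : ℝ) : ℂ) =
      ∫ u in Ioi (0:ℝ), ((Real.exp (-(x * u)) * hkf α u : ℝ) : ℂ) from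
    (integral_ofReal (𝕜 := ℂ)).symm]
  refine setIntegral_congr_fun measurableSet_Ioi fun u hu => ?_
  rw [Complex.ofReal_mul, Complex.ofReal_exp]
  congr 2
  push_cast
  ring

lemma bridge2 (α x : ℝ) (hα : 0 < α) (hx : 0 < x) :
    Complex.exp (-(α : ℂ) * (2 * (x:ℂ)) ^ (1/2 : ℂ)) / (2 * (x:ℂ)) ^ (1/2 : ℂ) =
      ((Real.exp (-(α * Real.sqrt (2 * x))) / Real.sqrt (2 * x) : ℝ) : ℂ) := by
  have h2 : (2 * (x:ℂ)) ^ (1/2 : ℂ) = ((Real.sqrt (2 * x) : ℝ) : ℂ) := by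
    rw [show (2 * (x:ℂ)) = ((2 * x : ℝ) : ℂ) by push_cast; ring,
      show (1/2 : ℂ) = ((1/2 : ℝ) : ℂ) by norm_num,
      ← Complex.ofReal_cpow (by positivity), ← Real.sqrt_eq_rpow]
  rw [h2, Complex.ofReal_div]
  congr 1
  rw [Complex.ofReal_exp]
  congr 1
  push_cast
  ring

lemma eq_on (α : ℝ) (hα : 0 < α) :
    EqOn (fun z => ∫ u in Ioi (0:ℝ), Complex.exp (-z * u) * (hkf α u : ℂ))
      (fun z : ℂ => Complex.exp (-(α : ℂ) * (2 * z) ^ (1/2 : ℂ)) / (2 * z) ^ (1/2 : ℂ))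
      {z : ℂ | 0 < z.re} := by
  have hopen : IsOpen {z : ℂ | 0 < z.re} := isOpen_lt continuous_const Complex.continuous_re
  have hFan : AnalyticOnNhd ℂ
      (fun z => ∫ u in Ioi (0:ℝ), Complex.exp (-z * u) * (hkf α u : ℂ)) {z : ℂ | 0 < z.re} :=
    DifferentiableOn.analyticOnNhd
      (fun z hz => (F_diff α hα z hz).differentiableWithinAt) hopen
  have hGan : AnalyticOnNhd ℂ
      (fun z : ℂ => Complex.exp (-(α : ℂ) * (2 * z) ^ (1/2 : ℂ)) / (2 * z) ^ (1/2 : ℂ))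
      {z : ℂ | 0 < z.re} :=
    DifferentiableOn.analyticOnNhd
      (fun z hz => (G_diff α z hz).differentiableWithinAt) hopen
  have hpre : IsPreconnected {z : ℂ | 0 < z.re} := (convex_halfSpace_re_gt 0).isPreconnected
  have h₀ : (1:ℂ) ∈ {z : ℂ | 0 < z.re} := by simp
  refine hFan.eqOn_of_preconnected_of_frequently_eq hGan hpre h₀ ?_
  have hseq : Tendsto (fun n : ℕ => ((1 + ((n:ℝ)+1)⁻¹ : ℝ) : ℂ)) atTop (𝓝[≠] 1) := by
    apply tendsto_nhdsWithin_of_tendsto_nhds_of_eventually_within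
    · have h1 : Tendsto (fun n : ℕ => (1 + ((n:ℝ)+1)⁻¹ : ℝ)) atTop (𝓝 1) := by
        have := tendsto_one_div_add_atTop_nhds_zero_nat (𝕜 := ℝ)
        simp only [one_div] at this
        simpa using tendsto_const_nhds.add this
      have h2 := (Complex.continuous_ofReal.tendsto (1:ℝ)).comp h1
      rw [Complex.ofReal_one] at h2
      exact h2
    · filter_upwards with n
      simp only [mem_compl_iff, mem_singleton_iff]
      intro h
      rw [show (1:ℂ) = ((1:ℝ):ℂ) by norm_num, Complex.ofReal_inj] at h
      have : (0:ℝ) < ((n:ℝ)+1)⁻¹ := by positivity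
      linarith
  apply hseq.frequently
  apply Frequently.of_forall
  intro n
  have hx : (0:ℝ) < 1 + ((n:ℝ)+1)⁻¹ := by positivity
  beta_reduce
  rw [bridge1 α _ hx, bridge2 α _ hα hx]
  exact Complex.ofReal_inj.mpr (by simpa only [hkf] using real_case α _ hα hx)

theorem laplace_heat_kernel (α : ℝ) (hα : 0 < α) (z : ℂ) (hz : 0 < z.re) :
    (∫ u in Set.Ioi (0 : ℝ),
        Complex.exp (-z * u) *
          (((1 / Real.sqrt (2 * Real.pi * u)) * Real.exp (-α ^ 2 / (2 * u)) : ℝ) : ℂ)) =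
      Complex.exp (-(α : ℂ) * (2 * z) ^ (1 / 2 : ℂ)) / (2 * z) ^ (1 / 2 : ℂ) := by
  have h := eq_on α hα hz
  simpa only [hkf] using h
end

section
/- For b > 0 and z a complex number with Re(z) > 0, the Laplace transform of the first passage density satisfies ∫₀^∞ exp(−z·w)·(b/√(2π))·w^{−3/2}·exp(−b²/(2w)) dw = exp(−b·√(2z)), with the principal branch of the square root. -/
open MeasureTheory Real Set Filter Topology

-- inversion substitution: t ↦ a / t on Ioi 0
lemma fp_inv_img (a : ℝ) (ha : 0 < a) : (fun t : ℝ => a / t) '' Ioi 0 = Ioi 0 := by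
  ext x
  constructor
  · rintro ⟨t, ht, rfl⟩; exact div_pos ha ht
  · intro hx; exact ⟨a / x, div_pos ha hx, by field_simp⟩

lemma fp_inv_inj (a : ℝ) (ha : 0 < a) : InjOn (fun t : ℝ => a / t) (Ioi 0) := by
  intro s hs t ht h
  simp only [mem_Ioi] at hs ht
  field_simp at h
  exact h.symm

lemma glasser_img (a : ℝ) (ha : 0 < a) : (fun t : ℝ => t - a / t) '' Ioi 0 = univ := by
  ext u
  simp only [mem_univ, iff_true, mem_image, mem_Ioi]
  set s := Real.sqrt (u ^ 2 + 4 * a) with hs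
  have hs2 : s ^ 2 = u ^ 2 + 4 * a := Real.sq_sqrt (by positivity)
  have hsu : |u| < s := by
    have := Real.sqrt_lt_sqrt (sq_abs u ▸ sq_nonneg u) (by nlinarith : u ^ 2 < u ^ 2 + 4 * a)
    simpa [Real.sqrt_sq_eq_abs] using this
  have ht : 0 < (u + s) / 2 := by
    have := neg_abs_le u; linarith [abs_lt.mp hsu]
  refine ⟨(u + s) / 2, ht, ?_⟩
  have h0 : (u + s) / 2 ≠ 0 := ht.ne'
  have key : a / ((u + s) / 2) = (u + s) / 2 - u := by
    rw [div_eq_iff h0]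
    linear_combination (-1/4 : ℝ) * hs2
  linarith [key]

lemma glasser_inj (a : ℝ) (ha : 0 < a) : InjOn (fun t : ℝ => t - a / t) (Ioi 0) := by
  intro s hs t ht h
  simp only [mem_Ioi] at hs ht
  simp only at h
  have h' : (s - t) * (s * t + a) = 0 := by
    have e : s * (s * t) - a * t = t * (s * t) - a * s := by
      field_simp at h; linarith [h]
    nlinarith [e]
  rcases mul_eq_zero.mp h' with h1 | h1
  · linarith
  · nlinarith

lemma glasser_half (p a : ℝ) (hp : 0 < p) (ha : 0 < a) :
    ∫ t in Ioi (0:ℝ), Real.exp (-p * (t - a / t) ^ 2) = Real.sqrt (π / p) / 2 := by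
  set g : ℝ → ℝ := fun t => Real.exp (-p * (t - a / t) ^ 2) with hg
  have hderiv : ∀ t ∈ Ioi (0:ℝ), HasDerivWithinAt (fun t : ℝ => a / t) (-(a / t ^ 2)) (Ioi 0) t := by
    intro t ht
    simp only [mem_Ioi] at ht
    have : HasDerivAt (fun t : ℝ => a / t) (-(a / t ^ 2)) t := by
      simpa [div_eq_mul_inv, neg_div] using (hasDerivAt_inv ht.ne').const_mul a
    exact this.hasDerivWithinAt
  -- symmetry: ∫ g = ∫ (a/t²) g
  have hsym : ∫ t in Ioi (0:ℝ), g t = ∫ t in Ioi (0:ℝ), (a / t ^ 2) * g t := by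
    conv_lhs => rw [← fp_inv_img a ha]
    rw [integral_image_eq_integral_abs_deriv_smul measurableSet_Ioi hderiv (fp_inv_inj a ha) g]
    refine setIntegral_congr_fun measurableSet_Ioi fun t ht => ?_
    simp only [mem_Ioi] at ht
    have : g (a / t) = g t := by
      simp only [hg]
      congr 1
      have : a / (a / t) = t := by field_simp
      rw [this]; ring
    rw [this, smul_eq_mul, abs_neg, abs_of_pos (by positivity)]
  -- integrability of g
  have hgcont : ContinuousOn g (Ioi 0) := by
    apply Continuous.comp_continuousOn continuous_exp
    apply ContinuousOn.mul continuousOn_const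
    exact ((continuousOn_id.sub (continuousOn_const.div continuousOn_id
      fun t ht => ne_of_gt ht)).pow 2)
  have hgle : ∀ t ∈ Ioi (0:ℝ), g t ≤ Real.exp (2 * p * a) * Real.exp (-p * t ^ 2) := by
    intro t ht
    simp only [mem_Ioi] at ht
    rw [hg, ← Real.exp_add]
    apply Real.exp_le_exp.mpr
    have h1 : (t - a / t) ^ 2 = t ^ 2 - 2 * a + (a / t) ^ 2 := by field_simp; ring
    nlinarith [sq_nonneg (a / t), sq_nonneg t]
  have hint_g : IntegrableOn g (Ioi 0) := by
    apply Integrable.mono' (g := fun t => Real.exp (2 * p * a) * Real.exp (-p * t ^ 2))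
    · exact ((integrable_exp_neg_mul_sq hp).const_mul _).integrableOn
    · exact hgcont.aestronglyMeasurable measurableSet_Ioi
    · filter_upwards [ae_restrict_mem measurableSet_Ioi] with t ht
      rw [Real.norm_eq_abs, abs_of_pos (Real.exp_pos _)]
      exact hgle t ht
  have hint_ag : IntegrableOn (fun t => (a / t ^ 2) * g t) (Ioi 0) := by
    have := (integrableOn_image_iff_integrableOn_abs_deriv_smul measurableSet_Ioi hderiv
      (fp_inv_inj a ha) g).mp (by rw [fp_inv_img a ha]; exact hint_g)
    apply this.congr_fun _ measurableSet_Ioi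
    intro t ht
    simp only [mem_Ioi] at ht
    have hgt : g (a / t) = g t := by
      simp only [hg]; congr 1
      have : a / (a / t) = t := by field_simp
      rw [this]; ring
    simp [hgt, abs_of_pos (show (0:ℝ) < a / t ^ 2 by positivity)]
  -- main substitution u = t - a/t
  have hderiv2 : ∀ t ∈ Ioi (0:ℝ), HasDerivWithinAt (fun t : ℝ => t - a / t)
      (1 + a / t ^ 2) (Ioi 0) t := by
    intro t ht
    have := (hasDerivWithinAt_id t (Ioi 0)).sub (hderiv t ht)
    rw [sub_neg_eq_add] at this
    exact this
  have hmain : ∫ u : ℝ, Real.exp (-p * u ^ 2) =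
      ∫ t in Ioi (0:ℝ), (1 + a / t ^ 2) * g t := by
    rw [← setIntegral_univ, ← glasser_img a ha,
      integral_image_eq_integral_abs_deriv_smul measurableSet_Ioi hderiv2 (glasser_inj a ha)]
    refine setIntegral_congr_fun measurableSet_Ioi fun t ht => ?_
    simp only [mem_Ioi] at ht
    rw [smul_eq_mul, abs_of_pos (by positivity)]
  have hsplit : ∫ t in Ioi (0:ℝ), (1 + a / t ^ 2) * g t
      = (∫ t in Ioi (0:ℝ), g t) + ∫ t in Ioi (0:ℝ), (a / t ^ 2) * g t := by
    rw [← integral_add hint_g hint_ag]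
    refine setIntegral_congr_fun measurableSet_Ioi fun t ht => ?_
    ring
  have hgauss : ∫ u : ℝ, Real.exp (-p * u ^ 2) = Real.sqrt (π / p) := integral_gaussian p
  rw [hgauss, hsplit, ← hsym] at hmain
  linarith [hmain]

lemma glasser_full (p q : ℝ) (hp : 0 < p) (hq : 0 < q) :
    ∫ t in Ioi (0:ℝ), Real.exp (-(p * t ^ 2 + q / t ^ 2)) =
      Real.sqrt (π / p) / 2 * Real.exp (-2 * Real.sqrt (p * q)) := by
  set a := Real.sqrt q / Real.sqrt p with ha_def
  have ha : 0 < a := div_pos (Real.sqrt_pos.mpr hq) (Real.sqrt_pos.mpr hp)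
  have hsp := Real.mul_self_sqrt hp.le
  have hsq := Real.mul_self_sqrt hq.le
  have hpa2 : p * a ^ 2 = q := by
    rw [ha_def, div_pow]
    rw [Real.sq_sqrt hp.le, Real.sq_sqrt hq.le]; field_simp
  have hpa : p * a = Real.sqrt (p * q) := by
    rw [Real.sqrt_mul hp.le, ha_def]
    rw [mul_div_assoc', div_eq_iff (Real.sqrt_pos.mpr hp).ne']
    linear_combination (-1 : ℝ) * Real.sqrt q * hsp
  have hpt : ∀ t ∈ Ioi (0:ℝ), Real.exp (-(p * t ^ 2 + q / t ^ 2)) =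
      Real.exp (-2 * Real.sqrt (p * q)) * Real.exp (-p * (t - a / t) ^ 2) := by
    intro t ht
    simp only [mem_Ioi] at ht
    rw [← Real.exp_add]
    congr 1
    rw [← hpa, ← hpa2]
    field_simp
    ring
  rw [setIntegral_congr_fun measurableSet_Ioi hpt, integral_const_mul,
    glasser_half p a hp ha]
  ring

lemma cpow_real_mul (r : ℝ) (hr : 0 < r) (w : ℂ) (hw : w ≠ 0) :
    ((r : ℂ) * w) ^ (1/2 : ℂ) = (Real.sqrt r : ℂ) * w ^ (1/2 : ℂ) := by
  have hrw : (r:ℂ) * w ≠ 0 := mul_ne_zero (Complex.ofReal_ne_zero.mpr hr.ne') hw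
  rw [Complex.cpow_def_of_ne_zero hrw, Complex.cpow_def_of_ne_zero hw,
    Complex.log_ofReal_mul hr hw, add_mul, Complex.exp_add]
  congr 1
  have h1 : Real.sqrt r = Real.exp (Real.log r * (1/2)) := by
    rw [Real.sqrt_eq_rpow, Real.rpow_def_of_pos hr]
  rw [h1, Complex.ofReal_exp]
  push_cast
  ring_nf

lemma exp_re_aux (c : ℂ) (t : ℝ) (ht : t ≠ 0) :
    (-(((t:ℂ)) ^ 2 / 2 + c / ((t:ℂ)) ^ 2)).re = -(t ^ 2 / 2 + c.re / t ^ 2) := by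
  have h : ((t:ℂ)) ^ 2 = ((t ^ 2 : ℝ) : ℂ) := by push_cast; ring
  have h3 : ((t ^ 2 : ℝ) : ℂ) / 2 = ((t ^ 2 / 2 : ℝ) : ℂ) := by push_cast; ring
  simp only [h, h3, Complex.div_ofReal_re, Complex.ofReal_re, Complex.neg_re, Complex.add_re]

lemma H_complex (c : ℂ) (hc : 0 < c.re) :
    ∫ t in Ioi (0:ℝ), Complex.exp (-((t:ℂ) ^ 2 / 2 + c / (t:ℂ) ^ 2)) =
      ((Real.sqrt (2 * π) / 2 : ℝ) : ℂ) * Complex.exp (-((2 : ℂ) * c) ^ (1/2 : ℂ)) := by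
  set U : Set ℂ := {c | 0 < c.re} with hUdef
  have hUopen : IsOpen U := isOpen_lt continuous_const Complex.continuous_re
  have hUconn : IsPreconnected U := (convex_halfSpace_re_gt 0).isPreconnected
  set f : ℂ → ℂ := fun c => ∫ t in Ioi (0:ℝ), Complex.exp (-((t:ℂ) ^ 2 / 2 + c / (t:ℂ) ^ 2))
    with hfdef
  set g : ℂ → ℂ := fun c => ((Real.sqrt (2 * π) / 2 : ℝ) : ℂ) *
    Complex.exp (-((2 : ℂ) * c) ^ (1/2 : ℂ)) with hgdef
  suffices h : EqOn f g U from h hc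
  have hfd : DifferentiableOn ℂ f U := by
    intro c0 hc0
    have hc0' : 0 < c0.re := hc0
    set δ : ℝ := c0.re / 2 with hδ
    have hδpos : 0 < δ := by positivity
    set μ := volume.restrict (Ioi (0:ℝ)) with hμ
    set F : ℂ → ℝ → ℂ := fun x t => Complex.exp (-((t:ℂ) ^ 2 / 2 + x / (t:ℂ) ^ 2)) with hF
    set F' : ℂ → ℝ → ℂ := fun x t =>
      Complex.exp (-((t:ℂ) ^ 2 / 2 + x / (t:ℂ) ^ 2)) * (-(1/(t:ℂ) ^ 2)) with hF'
    have hcont2 : ContinuousOn (fun t : ℝ => -(1/((t:ℂ)) ^ 2)) (Ioi 0) := by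
      apply ContinuousOn.neg
      apply ContinuousOn.div continuousOn_const
        ((Complex.continuous_ofReal.pow 2).continuousOn)
      intro t ht
      simp only [mem_Ioi] at ht
      exact pow_ne_zero 2 (Complex.ofReal_ne_zero.mpr (ne_of_gt ht))
    have hmeas : ∀ x : ℂ, AEStronglyMeasurable (F x) μ := by
      intro x
      apply ContinuousOn.aestronglyMeasurable _ measurableSet_Ioi
      apply Continuous.comp_continuousOn Complex.continuous_exp
      apply ContinuousOn.neg
      apply ContinuousOn.add
      · exact ((Complex.continuous_ofReal.pow 2).div_const 2).continuousOn
      · apply ContinuousOn.div continuousOn_const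
          ((Complex.continuous_ofReal.pow 2).continuousOn)
        intro t ht
        simp only [mem_Ioi] at ht
        exact pow_ne_zero 2 (Complex.ofReal_ne_zero.mpr (ne_of_gt ht))
    have hmeas' : AEStronglyMeasurable (F' c0) μ :=
      (hmeas c0).mul (hcont2.aestronglyMeasurable measurableSet_Ioi)
    have hnorm : ∀ (x : ℂ) (t : ℝ), t ≠ 0 → ‖F x t‖ = Real.exp (-(t ^ 2 / 2 + x.re / t ^ 2)) := by
      intro x t ht
      rw [hF]
      simp only
      rw [Complex.norm_exp, exp_re_aux x t ht]
    have hF_int : Integrable (F c0) μ := by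
      apply Integrable.mono' (g := fun t : ℝ => Real.exp (-(1/2) * t ^ 2))
      · exact (integrable_exp_neg_mul_sq (by norm_num : (0:ℝ) < 1/2)).restrict
      · exact hmeas c0
      · filter_upwards [ae_restrict_mem measurableSet_Ioi] with t ht
        simp only [mem_Ioi] at ht
        rw [hnorm c0 t ht.ne']
        apply Real.exp_le_exp.mpr
        have h1 : 0 ≤ c0.re / t ^ 2 := by positivity
        nlinarith
    have h_bound : ∀ᵐ t ∂μ, ∀ x ∈ Metric.ball c0 δ,
        ‖F' x t‖ ≤ (1/δ) * Real.exp (-(1/2) * t ^ 2) := by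
      filter_upwards [ae_restrict_mem measurableSet_Ioi] with t ht x hx
      simp only [mem_Ioi] at ht
      have hxre : δ ≤ x.re := by
        have h1 : |(x - c0).re| ≤ ‖x - c0‖ := Complex.abs_re_le_norm _
        have h2 : ‖x - c0‖ < δ := by
          rw [← dist_eq_norm]
          exact Metric.mem_ball.mp hx
        have h3 : |(x - c0).re| < δ := lt_of_le_of_lt h1 h2
        rw [Complex.sub_re, abs_lt] at h3
        simp only [hδ] at h3 ⊢
        linarith [h3.1]
      have hFn : ‖F' x t‖ = Real.exp (-(t ^ 2 / 2 + x.re / t ^ 2)) * (1 / t ^ 2) := by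
        rw [hF']
        simp only
        rw [norm_mul, hnorm x t ht.ne']
        congr 1
        rw [norm_neg, norm_div, norm_one, norm_pow, Complex.norm_real, Real.norm_eq_abs,
          abs_of_pos ht]
      rw [hFn]
      have hsplit : Real.exp (-(t ^ 2 / 2 + x.re / t ^ 2)) ≤
          Real.exp (-(1/2) * t ^ 2) * Real.exp (-(δ / t ^ 2)) := by
        rw [← Real.exp_add]
        apply Real.exp_le_exp.mpr
        have h4 : δ / t ^ 2 ≤ x.re / t ^ 2 := by gcongr
        linarith
      have hkey : (1 / t ^ 2) * Real.exp (-(δ / t ^ 2)) ≤ 1 / δ := by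
        set s : ℝ := 1 / t ^ 2 with hs
        have hs0 : 0 < s := by positivity
        have h1 : δ * s ≤ Real.exp (δ * s) := by
          have := Real.add_one_le_exp (δ * s)
          linarith
        have h2 : δ / t ^ 2 = δ * s := by rw [hs]; ring
        rw [h2, Real.exp_neg]
        have h3 : (Real.exp (δ * s))⁻¹ ≤ (δ * s)⁻¹ :=
          inv_anti₀ (by positivity) h1
        calc s * (Real.exp (δ * s))⁻¹ ≤ s * (δ * s)⁻¹ :=
              mul_le_mul_of_nonneg_left h3 hs0.le
          _ = 1 / δ := by field_simp
      calc Real.exp (-(t ^ 2 / 2 + x.re / t ^ 2)) * (1 / t ^ 2)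
          ≤ (Real.exp (-(1/2) * t ^ 2) * Real.exp (-(δ / t ^ 2))) * (1 / t ^ 2) :=
            mul_le_mul_of_nonneg_right hsplit (by positivity)
        _ = Real.exp (-(1/2) * t ^ 2) * ((1 / t ^ 2) * Real.exp (-(δ / t ^ 2))) := by ring
        _ ≤ Real.exp (-(1/2) * t ^ 2) * (1 / δ) :=
            mul_le_mul_of_nonneg_left hkey (Real.exp_pos _).le
        _ = (1/δ) * Real.exp (-(1/2) * t ^ 2) := by ring
    have hbound_int : Integrable (fun t : ℝ => (1/δ) * Real.exp (-(1/2) * t ^ 2)) μ :=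
      ((integrable_exp_neg_mul_sq (by norm_num : (0:ℝ) < 1/2)).const_mul (1/δ)).restrict
    have h_diff : ∀ᵐ t ∂μ, ∀ x ∈ Metric.ball c0 δ, HasDerivAt (fun y => F y t) (F' x t) x := by
      filter_upwards [ae_restrict_mem measurableSet_Ioi] with t ht x hx
      simp only [mem_Ioi] at ht
      have hinner : HasDerivAt (fun y : ℂ => -((t:ℂ) ^ 2 / 2 + y / (t:ℂ) ^ 2))
          (-(1/(t:ℂ) ^ 2)) x := by
        have h1 := (((hasDerivAt_id x).div_const ((t:ℂ) ^ 2)).const_add ((t:ℂ) ^ 2 / 2)).neg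
        exact h1
      exact hinner.cexp
    have hmain := hasDerivAt_integral_of_dominated_loc_of_deriv_le (Metric.ball_mem_nhds c0 hδpos)
      (Eventually.of_forall hmeas) hF_int hmeas' h_bound hbound_int h_diff
    exact hmain.2.differentiableAt.differentiableWithinAt
  have hgd : DifferentiableOn ℂ g U := by
    intro c0 hc0
    have hc0' : 0 < c0.re := hc0
    have h0 : (2:ℂ) * c0 ∈ Complex.slitPlane := by
      left
      have h2 : ((2:ℂ) * c0).re = 2 * c0.re := by simp [Complex.mul_re]
      rw [h2]; linarith
    have hd : DifferentiableAt ℂ (fun c : ℂ => ((2:ℂ) * c) ^ (1/2 : ℂ)) c0 :=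
      (((hasDerivAt_id c0).const_mul (2:ℂ)).cpow_const h0).differentiableAt
    exact ((hd.neg.cexp).const_mul _).differentiableWithinAt
  have key : ∀ x : ℝ, 0 < x → f ((x:ℂ)) = g ((x:ℂ)) := by
    intro x hx
    have hre : ∀ t ∈ Ioi (0:ℝ),
        Complex.exp (-((t:ℂ) ^ 2 / 2 + (x:ℂ) / (t:ℂ) ^ 2)) =
          ((Real.exp (-(1/2 * t ^ 2 + x / t ^ 2)) : ℝ) : ℂ) := by
      intro t ht
      rw [Complex.ofReal_exp]
      congr 1
      push_cast
      ring
    rw [hfdef]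
    simp only
    rw [setIntegral_congr_fun measurableSet_Ioi hre]
    rw [show (fun t : ℝ => ((Real.exp (-(1/2 * t ^ 2 + x / t ^ 2)) : ℝ) : ℂ)) =
      (fun t : ℝ => ((RCLike.ofReal (Real.exp (-(1/2 * t ^ 2 + x / t ^ 2))) : ℂ))) from rfl,
      integral_ofReal, glasser_full (1/2) x one_half_pos hx]
    rw [hgdef]
    simp only
    have e1 : π / (1/2 : ℝ) = 2 * π := by ring
    have e2 : 2 * Real.sqrt (1/2 * x) = Real.sqrt (2 * x) := by
      have h4 : Real.sqrt 4 = 2 := by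
        rw [show (4:ℝ) = 2^2 by norm_num, Real.sqrt_sq (by norm_num : (0:ℝ) ≤ 2)]
      have h5 : Real.sqrt (2*x) = Real.sqrt 4 * Real.sqrt (1/2 * x) := by
        rw [← Real.sqrt_mul (by norm_num : (0:ℝ) ≤ 4)]
        congr 1; ring
      rw [h5, h4]
    have e3 : ((2:ℂ) * (x:ℂ)) ^ (1/2 : ℂ) = ((Real.sqrt (2*x) : ℝ) : ℂ) := by
      have h2x : (0:ℝ) ≤ 2 * x := by positivity
      have hcast : ((2:ℂ) * (x:ℂ)) = (((2*x : ℝ)) : ℂ) := by push_cast; ring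
      rw [hcast, show ((1/2 : ℂ)) = (((1/2 : ℝ)) : ℂ) by norm_num,
        ← Complex.ofReal_cpow h2x, ← Real.sqrt_eq_rpow]
    rw [e1]
    rw [show -2 * Real.sqrt (1/2 * x) = -(2 * Real.sqrt (1/2*x)) by ring, e2, e3]
    norm_cast
  have h1U : (1:ℂ) ∈ U := by simp [hUdef]
  apply (hfd.analyticOnNhd hUopen).eqOn_of_preconnected_of_frequently_eq
    (hgd.analyticOnNhd hUopen) hUconn h1U
  -- frequently along reals
  have htend : Tendsto (fun n : ℕ => (((1 + ((n:ℝ)+1)⁻¹ : ℝ)) : ℂ)) atTop (𝓝[≠] (1:ℂ)) := by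
    apply tendsto_nhdsWithin_of_tendsto_nhds_of_eventually_within
    · have hr : Tendsto (fun n : ℕ => (1 + ((n:ℝ)+1)⁻¹ : ℝ)) atTop (𝓝 1) := by
        have := tendsto_one_div_add_atTop_nhds_zero_nat (𝕜 := ℝ)
        simpa [one_div] using tendsto_const_nhds.add this
      have h2 := (Complex.continuous_ofReal.tendsto 1).comp hr
      rw [Complex.ofReal_one] at h2
      exact h2
    · filter_upwards with n
      simp only [mem_compl_iff, mem_singleton_iff]
      intro h
      have : (1 + ((n:ℝ)+1)⁻¹ : ℝ) = 1 := by exact_mod_cast h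
      have hn : (0:ℝ) < ((n:ℝ)+1)⁻¹ := by positivity
      linarith
  apply htend.frequently
  apply Frequently.of_forall
  intro n
  exact key _ (by positivity)

theorem first_passage_laplace (b : ℝ) (hb : 0 < b) (z : ℂ) (hz : 0 < z.re) :
    (∫ w in Set.Ioi (0 : ℝ),
        Complex.exp (-z * w) *
          (((b / Real.sqrt (2 * Real.pi)) * w ^ (-(3 : ℝ) / 2) * Real.exp (-b ^ 2 / (2 * w)) : ℝ) : ℂ)) =
      Complex.exp (-(b : ℂ) * (2 * z) ^ (1 / 2 : ℂ)) := by
  set G : ℝ → ℂ := fun w => Complex.exp (-z * w) *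
    (((b / Real.sqrt (2 * π)) * w ^ (-(3:ℝ)/2) * Real.exp (-b^2/(2*w)) : ℝ) : ℂ) with hG
  have hsqpi : Real.sqrt (2*π) ≠ 0 := by positivity
  have himg : (fun t : ℝ => b^2 / t^2) '' Ioi 0 = Ioi 0 := by
    ext w
    constructor
    · rintro ⟨t, ht, rfl⟩
      simp only [mem_Ioi] at ht
      exact mem_Ioi.mpr (div_pos (pow_pos hb 2) (pow_pos ht 2))
    · intro hw
      simp only [mem_Ioi] at hw
      refine ⟨b / Real.sqrt w, mem_Ioi.mpr (div_pos hb (Real.sqrt_pos.mpr hw)), ?_⟩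
      have hsw : Real.sqrt w ^ 2 = w := Real.sq_sqrt hw.le
      have h1 : (b / Real.sqrt w)^2 = b^2 / w := by rw [div_pow, hsw]
      simp only [h1]
      rw [div_div_eq_mul_div, mul_comm, mul_div_assoc, div_self (by positivity), mul_one]
  have hinj : InjOn (fun t : ℝ => b^2/t^2) (Ioi 0) := by
    intro s hs t ht h
    simp only [mem_Ioi] at hs ht
    simp only at h
    have h2 : s^2 = t^2 := by
      field_simp at h
      nlinarith [h]
    rw [← Real.sqrt_sq hs.le, ← Real.sqrt_sq ht.le, h2]
  have hderiv : ∀ t ∈ Ioi (0:ℝ), HasDerivWithinAt (fun t : ℝ => b^2/t^2)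
      (-(2*b^2/t^3)) (Ioi 0) t := by
    intro t ht
    simp only [mem_Ioi] at ht
    have h := (((hasDerivAt_pow 2 t).inv (pow_ne_zero 2 ht.ne')).const_mul (b^2))
    have h2 : HasDerivAt (fun t : ℝ => b^2 * (t^2)⁻¹) (-(2*b^2/t^3)) t := by
      refine h.congr_deriv ?_
      field_simp
      ring
    have h3 : HasDerivAt (fun t : ℝ => b^2/t^2) (-(2*b^2/t^3)) t := by
      simpa [div_eq_mul_inv] using h2
    exact h3.hasDerivWithinAt
  have hsub := integral_image_eq_integral_abs_deriv_smul measurableSet_Ioi hderiv hinj G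
  rw [himg] at hsub
  have hre : 0 < (z * ((b:ℂ))^2).re := by
    have hcast : ((b:ℂ))^2 = ((b^2 : ℝ) : ℂ) := by push_cast; ring
    rw [hcast]
    simp only [Complex.mul_re, Complex.ofReal_re, Complex.ofReal_im, mul_zero, sub_zero]
    positivity
  have hpt : ∀ t ∈ Ioi (0:ℝ), |(-(2*b^2/t^3))| • G (b^2/t^2)
      = ((2 / Real.sqrt (2*π) : ℝ) : ℂ) *
        Complex.exp (-((t:ℂ)^2/2 + (z * ((b:ℂ))^2) / ((t:ℂ))^2)) := by
    intro t ht
    simp only [mem_Ioi] at ht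
    rw [hG]
    simp only
    have habs : |(-(2*b^2/t^3))| = 2*b^2/t^3 := by rw [abs_neg, abs_of_pos (by positivity)]
    have hbt : (0:ℝ) ≤ b/t := (div_pos hb ht).le
    have hrpow : ((b^2/t^2 : ℝ)) ^ (-(3:ℝ)/2) = t^3 / b^3 := by
      rw [show (b^2/t^2 : ℝ) = (b/t)^2 by ring,
        ← Real.rpow_natCast (b/t) 2, ← Real.rpow_mul hbt,
        show ((2:ℕ):ℝ) * (-(3:ℝ)/2) = -(3:ℝ) by norm_num,
        Real.rpow_neg hbt,
        show (3:ℝ) = ((3:ℕ):ℝ) by norm_num,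
        Real.rpow_natCast, div_pow, inv_div]
    have harg : -b^2 / (2 * (b^2/t^2)) = -(1/2 * t^2) := by
      field_simp
    rw [habs, hrpow, harg]
    have hexp1 : Complex.exp (-z * ((b^2/t^2 : ℝ) : ℂ)) =
        Complex.exp (-((z * ((b:ℂ))^2)/((t:ℂ))^2)) := by
      congr 1
      push_cast
      ring
    have hexp2 : Complex.exp (-(((t:ℂ))^2/2 + (z*((b:ℂ))^2)/((t:ℂ))^2)) =
        Complex.exp (-((z*((b:ℂ))^2)/((t:ℂ))^2)) * ((Real.exp (-(1/2*t^2)) : ℝ) : ℂ) := by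
      rw [Complex.ofReal_exp, ← Complex.exp_add]
      congr 1
      push_cast
      ring
    have hsc : (2*b^2/t^3) * ((b/Real.sqrt (2*π)) * (t^3/b^3) * Real.exp (-(1/2*t^2)))
        = (2/Real.sqrt (2*π)) * Real.exp (-(1/2*t^2)) := by
      field_simp
    rw [hexp1, hexp2, Complex.real_smul]
    trans (Complex.exp (-(z * ((b:ℂ))^2 / ((t:ℂ))^2)) *
      ((2 * b^2 / t^3 * (b / Real.sqrt (2*π) * (t^3/b^3) * Real.exp (-(1/2*t^2))) : ℝ) : ℂ))
    · push_cast
      ring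
    · rw [hsc]
      push_cast
      ring
  rw [hsub, setIntegral_congr_fun measurableSet_Ioi hpt, integral_const_mul,
    H_complex (z * ((b:ℂ))^2) hre]
  have h2z : (2:ℂ) * z ≠ 0 := by
    intro h
    have : ((2:ℂ) * z).re = 2 * z.re := by simp [Complex.mul_re]
    rw [h] at this
    simp at this
    linarith
  have hcpow : ((2:ℂ) * (z * ((b:ℂ))^2)) ^ (1/2 : ℂ) = (b:ℂ) * ((2:ℂ)*z) ^ (1/2 : ℂ) := by
    rw [show (2:ℂ) * (z * ((b:ℂ))^2) = (((b^2 : ℝ)):ℂ) * ((2:ℂ)*z) by push_cast; ring]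
    rw [cpow_real_mul (b^2) (by positivity) ((2:ℂ)*z) h2z, Real.sqrt_sq hb.le]
  rw [hcpow]
  rw [← mul_assoc, ← Complex.ofReal_mul]
  rw [show (2/Real.sqrt (2*π)) * (Real.sqrt (2*π)/2) = 1 by field_simp]
  rw [Complex.ofReal_one, one_mul]
  ring_nf
end
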